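/- Let H be a nonzero complex Hilbert space and let B, C be bounded linear operators on H. Then w(|B| + i|C|)² ≤ ‖B*B + C*C‖, where ‖·‖ denotes the operator norm. -/

import Mathlib

open scoped InnerProductSpace
open ContinuousLinearMap

variable {H : Type*} [NormedAddCommGroup H] [InnerProductSpace ℂ H]
  [CompleteSpace H] [Nontrivial H]

/-- The numerical radius of a bounded linear operator. -/
noncomputable def numRad (A : H →L[ℂ] H) : ℝ :=
  ⨆ x : {x : H // ‖x‖ = 1}, ‖⟪A x.1, x.1⟫_ℂ‖

/-- The Crawford number of a bounded linear operator. -/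
noncomputable def crawford (A : H →L[ℂ] H) : ℝ :=
  ⨅ x : {x : H // ‖x‖ = 1}, ‖⟪A x.1, x.1⟫_ℂ‖

/-- The Euclidean operator radius of a pair of bounded linear operators. -/
noncomputable def euclRad (B C : H →L[ℂ] H) : ℝ :=
  ⨆ x : {x : H // ‖x‖ = 1}, Real.sqrt (‖⟪B x.1, x.1⟫_ℂ‖ ^ 2 + ‖⟪C x.1, x.1⟫_ℂ‖ ^ 2)

/-- The absolute value `|A| = (A*A)^(1/2)` of a bounded linear operator. -/
noncomputable def opAbs (A : H →L[ℂ] H) : H →L[ℂ] H := CFC.sqrt (adjoint A * A)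

/-- The real part `Re(A) = (A + A*)/2` of a bounded linear operator. -/
noncomputable def reOp (A : H →L[ℂ] H) : H →L[ℂ] H := (2 : ℂ)⁻¹ • (A + adjoint A)

/-- The imaginary part `Im(A) = (A - A*)/(2i)` of a bounded linear operator. -/
noncomputable def imOp (A : H →L[ℂ] H) : H →L[ℂ] H := (2 * Complex.I)⁻¹ • (A - adjoint A)

set_option synthInstance.maxHeartbeats 1000000
set_option maxHeartbeats 1000000

omit [Nontrivial H] in
lemma opAbs_isPositive (A : H →L[ℂ] H) : (opAbs A).IsPositive :=
  (ContinuousLinearMap.nonneg_iff_isPositive _).mp (CFC.sqrt_nonneg _)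

omit [Nontrivial H] in
lemma adjoint_mul_self_nonneg' (A : H →L[ℂ] H) : (0 : H →L[ℂ] H) ≤ adjoint A * A := by
  simpa [ContinuousLinearMap.star_eq_adjoint] using star_mul_self_nonneg A

omit [Nontrivial H] in
lemma opAbs_mul_self (A : H →L[ℂ] H) : opAbs A * opAbs A = adjoint A * A :=
  CFC.sqrt_mul_sqrt_self _ (adjoint_mul_self_nonneg' A)

omit [Nontrivial H] in
lemma opAbs_inner_eq_re (A : H →L[ℂ] H) (x : H) :
    ((Complex.re ⟪opAbs A x, x⟫_ℂ : ℂ)) = ⟪opAbs A x, x⟫_ℂ :=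
  ((ContinuousLinearMap.isPositive_iff_complex _).mp (opAbs_isPositive A) x).1

omit [Nontrivial H] in
/-- Key pointwise bound. -/
lemma opAbs_inner_sq_le (A : H →L[ℂ] H) (x : H) (hx : ‖x‖ = 1) :
    (Complex.re ⟪opAbs A x, x⟫_ℂ) ^ 2 ≤ Complex.re ⟪(adjoint A * A) x, x⟫_ℂ := by
  set T := opAbs A with hT
  have hsa : adjoint T = T := by
    have := (opAbs_isPositive A).isSelfAdjoint
    rwa [ContinuousLinearMap.isSelfAdjoint_iff'] at this
  have h1 : (Complex.re ⟪T x, x⟫_ℂ) ^ 2 ≤ ‖⟪T x, x⟫_ℂ‖ ^ 2 := by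
    rw [← sq_abs]
    exact pow_le_pow_left₀ (abs_nonneg _) (Complex.abs_re_le_norm _) 2
  have h2 : ‖⟪T x, x⟫_ℂ‖ ^ 2 ≤ ‖T x‖ ^ 2 := by
    apply pow_le_pow_left₀ (norm_nonneg _)
    calc ‖⟪T x, x⟫_ℂ‖ ≤ ‖T x‖ * ‖x‖ := norm_inner_le_norm _ _
      _ = ‖T x‖ := by rw [hx, mul_one]
  have h3 : ‖T x‖ ^ 2 = Complex.re ⟪(adjoint A * A) x, x⟫_ℂ := by
    have heq : ⟪T x, T x⟫_ℂ = ⟪(adjoint A * A) x, x⟫_ℂ := by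
      calc ⟪T x, T x⟫_ℂ = ⟪adjoint T (T x), x⟫_ℂ := by
            rw [ContinuousLinearMap.adjoint_inner_left]
        _ = ⟪(adjoint A * A) x, x⟫_ℂ := by
            rw [hsa, ← ContinuousLinearMap.mul_apply, opAbs_mul_self]
    rw [← inner_self_eq_norm_sq (𝕜 := ℂ) (T x), heq]; rfl
  linarith

theorem stmt2 (B C : H →L[ℂ] H) :
    (numRad (opAbs B + Complex.I • opAbs C)) ^ 2 ≤
      ‖adjoint B * B + adjoint C * C‖ := by
  set M := ‖adjoint B * B + adjoint C * C‖ with hM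
  have hM0 : 0 ≤ M := norm_nonneg _
  have hne : Nonempty {x : H // ‖x‖ = 1} := by
    obtain ⟨x, hx⟩ := exists_norm_eq H (zero_le_one (α := ℝ))
    exact ⟨⟨x, hx⟩⟩
  -- pointwise bound
  have key : ∀ x : H, ‖x‖ = 1 →
      ‖⟪(opAbs B + Complex.I • opAbs C) x, x⟫_ℂ‖ ^ 2 ≤ M := by
    intro x hx
    set a := Complex.re ⟪opAbs B x, x⟫_ℂ with ha
    set b := Complex.re ⟪opAbs C x, x⟫_ℂ with hb
    have hval : ⟪(opAbs B + Complex.I • opAbs C) x, x⟫_ℂ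
        = (a : ℂ) - Complex.I * (b : ℂ) := by
      rw [ContinuousLinearMap.add_apply, inner_add_left,
        ContinuousLinearMap.smul_apply, inner_smul_left,
        opAbs_inner_eq_re B x, opAbs_inner_eq_re C x]
      simp [Complex.conj_I, sub_eq_add_neg, neg_mul]
    have hnorm : ‖⟪(opAbs B + Complex.I • opAbs C) x, x⟫_ℂ‖ ^ 2 = a ^ 2 + b ^ 2 := by
      rw [hval, Complex.sq_norm, Complex.normSq_apply]
      simp [Complex.sub_re, Complex.sub_im, Complex.mul_re, Complex.mul_im]
      ring
    have hB := opAbs_inner_sq_le B x hx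
    have hC := opAbs_inner_sq_le C x hx
    have hsum : a ^ 2 + b ^ 2 ≤
        Complex.re ⟪(adjoint B * B + adjoint C * C) x, x⟫_ℂ := by
      rw [ContinuousLinearMap.add_apply, inner_add_left, Complex.add_re]
      linarith
    have hend : Complex.re ⟪(adjoint B * B + adjoint C * C) x, x⟫_ℂ ≤ M := by
      calc Complex.re ⟪(adjoint B * B + adjoint C * C) x, x⟫_ℂ
          ≤ ‖⟪(adjoint B * B + adjoint C * C) x, x⟫_ℂ‖ := Complex.re_le_norm _
        _ ≤ ‖(adjoint B * B + adjoint C * C) x‖ * ‖x‖ := norm_inner_le_norm _ _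
        _ = ‖(adjoint B * B + adjoint C * C) x‖ := by rw [hx, mul_one]
        _ ≤ M := by
            have := le_opNorm (adjoint B * B + adjoint C * C) x
            rwa [hx, mul_one] at this
    rw [hnorm]; linarith
  -- numRad bounds
  have hsup_le : numRad (opAbs B + Complex.I • opAbs C) ≤ Real.sqrt M := by
    apply ciSup_le
    intro x
    rw [Real.le_sqrt (norm_nonneg _) hM0]
    exact key x.1 x.2
  have hsup0 : 0 ≤ numRad (opAbs B + Complex.I • opAbs C) :=
    Real.iSup_nonneg fun x => norm_nonneg _
  calc numRad (opAbs B + Complex.I • opAbs C) ^ 2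
      ≤ Real.sqrt M ^ 2 := pow_le_pow_left₀ hsup0 hsup_le 2
    _ = M := Real.sq_sqrt hM0
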